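/- Let C be a triangulated category, let S ⊆ R be full subcategories, and let W' be the class of morphisms w such that in any triangle Z --r--> X --w--> Y --s--> ΣZ, the morphism r factors through R^⊥ and s factors through S^⊥. If g : Y → Z and the composite g∘f both belong to W', then f belongs to W'. -/

import Mathlib

open CategoryTheory CategoryTheory.Limits CategoryTheory.Pretriangulated

variable {C : Type*} [Category C] [Preadditive C] [HasZeroObject C]
  [HasShift C ℤ] [∀ n : ℤ, Functor.Additive (CategoryTheory.shiftFunctor C n)]
  [Pretriangulated C]

/-- `f` factors through an object of the set `S`. -/
def FactorsThruSet (S : Set C) {X Y : C} (f : X ⟶ Y) : Prop :=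
  ∃ U ∈ S, ∃ (a : X ⟶ U) (b : U ⟶ Y), f = a ≫ b

/-- The right perpendicular subcategory `T^⊥` of a full subcategory `T`. -/
def rperp (T : Set C) : Set C := {Z | ∀ T' ∈ T, ∀ (f : T' ⟶ Z), f = 0}
/-- The class `W'` determined by a pair of subcategories `R`, `S`. -/
def W'class (R S : Set C) {X Y : C} (w : X ⟶ Y) : Prop :=
  ∀ (Z : C) (r : Z ⟶ X) (s : Y ⟶ Z⟦(1:ℤ)⟧),
    (Triangle.mk r w s ∈ distTriang C) →
      FactorsThruSet (rperp R) r ∧ FactorsThruSet (rperp S) s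

/-- If `S ⊆ R`, `g` and `g ∘ f` belong to `W'`, then `f` belongs to `W'`. -/
theorem W'class_of_comp_right (R S : Set C) (hSR : S ⊆ R)
    {X Y Z : C} (f : X ⟶ Y) (g : Y ⟶ Z)
    (hg : W'class R S g) (hgf : W'class R S (f ≫ g)) :
    W'class R S f := by
  intro Z' r s hA
  -- triangle (C) : fiber of f ≫ g
  obtain ⟨F, c, d, hC⟩ := distinguished_cocone_triangle₁ (f ≫ g)
  obtain ⟨⟨V', hV', c₁, c₂, hc⟩, ⟨W', hW', d₁, d₂, hd⟩⟩ := hgf F c d hC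
  -- triangle (B) : fiber of g
  obtain ⟨Fg, a, b, hB⟩ := distinguished_cocone_triangle₁ g
  obtain ⟨⟨V, hV, a₁, a₂, ha⟩, -⟩ := hg Fg a b hB
  -- the comparison map Θ : Z'⟦1⟧ ⟶ F⟦1⟧
  obtain ⟨Θ, hΘ₁, hΘ₂⟩ := complete_distinguished_triangle_morphism
    (Triangle.mk r f s).rotate (Triangle.mk c (f ≫ g) d).rotate
    (rot_of_distTriang _ hA) (rot_of_distTriang _ hC) (𝟙 X) g (Category.id_comp _).symm
  change Z'⟦(1:ℤ)⟧ ⟶ F⟦(1:ℤ)⟧ at Θ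
  change s ≫ Θ = g ≫ d at hΘ₁
  change (-r⟦(1:ℤ)⟧') ≫ (𝟙 X)⟦(1:ℤ)⟧' = Θ ≫ (-c⟦(1:ℤ)⟧') at hΘ₂
  -- hΘ₁ : s ≫ Θ = g ≫ d
  have hrc : r⟦(1:ℤ)⟧' = Θ ≫ c⟦(1:ℤ)⟧' := by simpa using hΘ₂
  constructor
  · -- Goal 1 : r factors through `rperp R`
    have hr : r = ((shiftFunctor C (1:ℤ)).preimage Θ) ≫ c := by
      apply (shiftFunctor C (1:ℤ)).map_injective
      rw [Functor.map_comp, Functor.map_preimage, ← hrc]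
    exact ⟨V', hV', (shiftFunctor C (1:ℤ)).preimage Θ ≫ c₁, c₂, by
      rw [hr, hc, Category.assoc]⟩
  · -- Goal 2 : s factors through `rperp S`
    -- the fiber G of Θ
    obtain ⟨G, e, t, hTG⟩ := distinguished_cocone_triangle₁ Θ
    have heΘ : e ≫ Θ = 0 := comp_distTriang_mor_zero₁₂ _ hTG
    have hΘt : Θ ≫ t = 0 := comp_distTriang_mor_zero₂₃ _ hTG
    -- e factors through s
    have heR : e ≫ r⟦(1:ℤ)⟧' = 0 := by
      rw [hrc, ← Category.assoc, heΘ, Limits.zero_comp]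
    obtain ⟨et, het⟩ : ∃ et : G ⟶ Y, e = et ≫ s := Triangle.coyoneda_exact₁ _ hA e heR
    -- het : e = et ≫ s
    have hx0 : (et ≫ g) ≫ d = 0 := by
      rw [Category.assoc, ← hΘ₁, ← Category.assoc, ← het, heΘ]
    obtain ⟨x, hx⟩ : ∃ x : G ⟶ X, et ≫ g = x ≫ (f ≫ g) := Triangle.coyoneda_exact₃ _ hC (et ≫ g) hx0
    -- hx : et ≫ g = x ≫ (f ≫ g)
    have hy0 : (et - x ≫ f) ≫ g = 0 := by
      rw [Preadditive.sub_comp, Category.assoc, ← hx, sub_self]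
    obtain ⟨yt, hyt⟩ : ∃ yt : G ⟶ Fg, et - x ≫ f = yt ≫ a := Triangle.coyoneda_exact₂ _ hB (et - x ≫ f) hy0
    -- hyt : et - x ≫ f = yt ≫ a
    have hfs : f ≫ s = 0 := comp_distTriang_mor_zero₂₃ _ hA
    set e₁ : G ⟶ V := yt ≫ a₁ with he₁def
    set ρ : V ⟶ Z'⟦(1:ℤ)⟧ := a₂ ≫ s with hρdef
    have he : e = e₁ ≫ ρ := by
      have hxf : (x ≫ f) ≫ s = 0 := by rw [Category.assoc, hfs, Limits.comp_zero]
      calc e = et ≫ s := het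
        _ = (et - x ≫ f) ≫ s + (x ≫ f) ≫ s := by
              rw [← Preadditive.add_comp]; congr 1; abel
        _ = (yt ≫ a) ≫ s := by rw [hyt, hxf, add_zero]
        _ = e₁ ≫ ρ := by rw [ha, he₁def, hρdef]; simp only [Category.assoc]
    -- the homotopy pullback P
    set Φ : (Z'⟦(1:ℤ)⟧ ⊞ W') ⟶ F⟦(1:ℤ)⟧ := biprod.desc Θ (-d₂) with hΦdef
    obtain ⟨P, π, dl, hTP⟩ := distinguished_cocone_triangle₁ Φ
    have hπΦ : π ≫ Φ = 0 := comp_distTriang_mor_zero₁₂ _ hTP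
    -- lift of (s, g ≫ d₁) to P
    have hξ0 : biprod.lift s (g ≫ d₁) ≫ Φ = 0 := by
      rw [hΦdef, biprod.lift_desc, hΘ₁, hd, Preadditive.comp_neg, Category.assoc,
        ← Category.assoc g d₁ d₂, add_neg_cancel]
    obtain ⟨ξ, hξ⟩ : ∃ ξ : Y ⟶ P, biprod.lift s (g ≫ d₁) = ξ ≫ π := Triangle.coyoneda_exact₂ _ hTP (biprod.lift s (g ≫ d₁)) hξ0
    -- hξ : biprod.lift s (g ≫ d₁) = ξ ≫ π
    -- the comparison map j : G ⟶ P
    obtain ⟨u₃, hu₁, hu₂⟩ := complete_distinguished_triangle_morphism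
      (Triangle.mk e Θ t).rotate (Triangle.mk π Φ dl).rotate
      (rot_of_distTriang _ hTG) (rot_of_distTriang _ hTP)
      biprod.inl (𝟙 _) (by change Θ ≫ 𝟙 _ = biprod.inl ≫ Φ; rw [Category.comp_id, hΦdef, biprod.inl_desc])
    change G⟦(1:ℤ)⟧ ⟶ P⟦(1:ℤ)⟧ at u₃
    change t ≫ u₃ = 𝟙 _ ≫ dl at hu₁
    change (-e⟦(1:ℤ)⟧') ≫ (biprod.inl : Z'⟦(1:ℤ)⟧ ⟶ Z'⟦(1:ℤ)⟧ ⊞ W')⟦(1:ℤ)⟧' = u₃ ≫ (-π⟦(1:ℤ)⟧') at hu₂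
    rw [Category.id_comp] at hu₁
    -- hu₁ : t ≫ u₃ = dl
    have hu₂' : u₃ ≫ π⟦(1:ℤ)⟧' = (e ≫ biprod.inl)⟦(1:ℤ)⟧' := by
      have h' := hu₂
      simp only [Preadditive.neg_comp, Preadditive.comp_neg, neg_inj] at h'
      rw [← Functor.map_comp] at h'
      exact h'.symm
    set j : G ⟶ P := (shiftFunctor C (1:ℤ)).preimage u₃ with hjdef
    have hju₃ : j⟦(1:ℤ)⟧' = u₃ := Functor.map_preimage _ _
    have hjπ : j ≫ π = e ≫ biprod.inl := by
      apply (shiftFunctor C (1:ℤ)).map_injective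
      rw [Functor.map_comp, hju₃, hu₂']
    -- the object Q
    obtain ⟨Q, kl, mq, hTQ⟩ := distinguished_cocone_triangle (biprod.lift j (-e₁))
    have hψkl : biprod.lift j (-e₁) ≫ kl = 0 := comp_distTriang_mor_zero₁₂ _ hTQ
    have hjkl : j ≫ biprod.inl ≫ kl = e₁ ≫ biprod.inr ≫ kl := by
      have : (j ≫ biprod.inl + (-e₁) ≫ biprod.inr) ≫ kl = 0 := by
        rw [← hψkl]; congr 1; apply biprod.hom_ext <;> simp
      simpa [Preadditive.add_comp, Preadditive.neg_comp, add_neg_eq_zero] using this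
    -- the map μ : Q ⟶ Z'⟦1⟧
    have hμ0 : biprod.lift j (-e₁) ≫ biprod.desc (π ≫ biprod.fst) ρ = 0 := by
      rw [biprod.lift_desc, ← Category.assoc, hjπ]
      simp [he]
    obtain ⟨μ, hμ⟩ : ∃ μ : Q ⟶ Z'⟦(1:ℤ)⟧, biprod.desc (π ≫ biprod.fst) ρ = kl ≫ μ := Triangle.yoneda_exact₂ _ hTQ (biprod.desc (π ≫ biprod.fst) ρ) hμ0
    -- hμ : biprod.desc (π ≫ biprod.fst) ρ = kl ≫ μ
    -- s factors through Q
    have hs : s = (ξ ≫ biprod.inl ≫ kl) ≫ μ := by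
      have h1 : biprod.inl ≫ kl ≫ μ = π ≫ biprod.fst := by
        rw [← hμ, biprod.inl_desc]
      simp only [Category.assoc]
      rw [h1, ← Category.assoc, ← hξ, biprod.lift_fst]
    -- Q is in `rperp S`
    have hQ : Q ∈ rperp S := by
      intro T hT t₀
      have hTV : ∀ (χ : T ⟶ V), χ = 0 := fun χ => hV T (hSR hT) χ
      have hTW' : ∀ (χ : T ⟶ W'), χ = 0 := fun χ => hW' T hT χ
      have hTV1 : ∀ (χ : T⟦(1:ℤ)⟧ ⟶ V⟦(1:ℤ)⟧), χ = 0 := by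
        intro χ
        obtain ⟨χ₀, hχ₀⟩ := (shiftFunctor C (1:ℤ)).map_surjective χ
        rw [← hχ₀, hTV χ₀, Functor.map_zero]
      set v : T ⟶ G⟦(1:ℤ)⟧ := t₀ ≫ mq with hvdef
      -- step (a) : v kills j⟦1⟧ and e₁⟦1⟧
      have h31 : mq ≫ (biprod.lift j (-e₁))⟦(1:ℤ)⟧' = 0 :=
        comp_distTriang_mor_zero₃₁ _ hTQ
      have hlift : v ≫ (biprod.lift j (-e₁))⟦(1:ℤ)⟧' = 0 := by
        rw [hvdef, Category.assoc, h31, Limits.comp_zero]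
      have hvj : v ≫ j⟦(1:ℤ)⟧' = 0 := by
        have : v ≫ (biprod.lift j (-e₁))⟦(1:ℤ)⟧' ≫ (biprod.fst)⟦(1:ℤ)⟧' = 0 := by
          rw [← Category.assoc, hlift, Limits.zero_comp]
        rw [← Functor.map_comp, biprod.lift_fst] at this
        exact this
      have hve₁ : v ≫ e₁⟦(1:ℤ)⟧' = 0 := by
        have : v ≫ (biprod.lift j (-e₁))⟦(1:ℤ)⟧' ≫ (biprod.snd)⟦(1:ℤ)⟧' = 0 := by
          rw [← Category.assoc, hlift, Limits.zero_comp]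
        rw [← Functor.map_comp, biprod.lift_snd, Functor.map_neg,
          Preadditive.comp_neg, neg_eq_zero] at this
        exact this
      have hve : v ≫ e⟦(1:ℤ)⟧' = 0 := by
        rw [he, Functor.map_comp, ← Category.assoc, hve₁, Limits.zero_comp]
      -- step (c) : v = v₁ ≫ t
      have hve' : v ≫ (-e⟦(1:ℤ)⟧') = 0 := by
        rw [Preadditive.comp_neg, hve, neg_zero]
      obtain ⟨v₁, hv₁⟩ : ∃ v₁ : T ⟶ F⟦(1:ℤ)⟧, v = v₁ ≫ t :=
        Triangle.coyoneda_exact₂ _ (rot_of_distTriang _ (rot_of_distTriang _ hTG)) v hve'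
      -- step (d) : v₁ = v₂ ≫ Φ
      have hv₁dl : v₁ ≫ dl = 0 := by
        rw [← hu₁, ← Category.assoc, ← hv₁, ← hju₃, hvj]
      obtain ⟨v₂, hv₂⟩ : ∃ v₂ : T ⟶ Z'⟦(1:ℤ)⟧ ⊞ W', v₁ = v₂ ≫ Φ :=
        Triangle.coyoneda_exact₂ _ (rot_of_distTriang _ hTP) v₁ hv₁dl
      -- step (e) : v = 0
      have hv₂snd : v₂ ≫ biprod.snd = 0 := hTW' _
      have hv₂' : v₂ = (v₂ ≫ biprod.fst) ≫ biprod.inl := by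
        apply biprod.hom_ext
        · simp
        · simp [hv₂snd]
      have hv0 : v = 0 := by
        rw [hv₁, hv₂, hv₂', hΦdef]
        simp only [Category.assoc, biprod.inl_desc, hΘt, Limits.comp_zero]
      -- step (f) : t₀ comes from P ⊞ V
      have ht₀mq : t₀ ≫ mq = 0 := hv0
      obtain ⟨w₀, hw₀⟩ : ∃ w₀ : T ⟶ P ⊞ V, t₀ = w₀ ≫ kl :=
        Triangle.coyoneda_exact₃ _ hTQ t₀ ht₀mq
      -- step (g) : t₀ = u ≫ inl ≫ kl
      have hw₀snd : w₀ ≫ biprod.snd = 0 := hTV _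
      have hw₀' : w₀ = (w₀ ≫ biprod.fst) ≫ biprod.inl := by
        apply biprod.hom_ext
        · simp
        · simp [hw₀snd]
      set u : T ⟶ P := w₀ ≫ biprod.fst with hudef
      have ht₀ : t₀ = u ≫ biprod.inl ≫ kl := by
        rw [hw₀, hw₀', Category.assoc]
      -- step (h) : the first component of u ≫ π kills Θ
      have huπsnd : u ≫ π ≫ biprod.snd = 0 := hTW' _
      have hπ' : π ≫ biprod.fst ≫ Θ = π ≫ biprod.snd ≫ d₂ := by
        have h2 : π ≫ Φ = 0 := hπΦ
        rw [hΦdef, biprod.desc_eq] at h2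
        rw [Preadditive.comp_add, Preadditive.comp_neg] at h2
        rw [← sub_eq_zero]
        simpa [sub_eq_add_neg, Category.assoc] using h2
      have hη₁Θ : (u ≫ π ≫ biprod.fst) ≫ Θ = 0 := by
        have h4 : (u ≫ π ≫ biprod.fst) ≫ Θ = (u ≫ π ≫ biprod.snd) ≫ d₂ := by
          simp only [Category.assoc]
          rw [hπ']
        rw [h4, huπsnd, Limits.zero_comp]
      -- step (i) : u ≫ π ≫ fst = η₀ ≫ e
      obtain ⟨η₀, hη₀⟩ : ∃ η₀ : T ⟶ G, u ≫ π ≫ biprod.fst = η₀ ≫ e :=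
        Triangle.coyoneda_exact₂ _ hTG _ hη₁Θ
      -- step (j) : u - η₀ ≫ j kills π
      have hu'π : (u - η₀ ≫ j) ≫ π = 0 := by
        rw [Preadditive.sub_comp, Category.assoc η₀ j π, hjπ]
        apply biprod.hom_ext
        · rw [Preadditive.sub_comp]
          simp [hη₀]
        · rw [Preadditive.sub_comp]
          simp [huπsnd]
      -- step (k) : (u - η₀ ≫ j)⟦1⟧ factors through dl
      have hu'sh : (u - η₀ ≫ j)⟦(1:ℤ)⟧' ≫ (-π⟦(1:ℤ)⟧') = 0 := by
        rw [Preadditive.comp_neg, ← Functor.map_comp, hu'π, Functor.map_zero, neg_zero]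
      obtain ⟨u₁, hu₁'⟩ : ∃ u₁ : T⟦(1:ℤ)⟧ ⟶ F⟦(1:ℤ)⟧, (u - η₀ ≫ j)⟦(1:ℤ)⟧' = u₁ ≫ dl :=
        Triangle.coyoneda_exact₂ _ (rot_of_distTriang _ (rot_of_distTriang _ hTP)) _ hu'sh
      -- step (l) : (u - η₀ ≫ j) ≫ inl ≫ kl = 0
      have hz : u₁ ≫ t ≫ e₁⟦(1:ℤ)⟧' = 0 := hTV1 _
      have hukl : (u - η₀ ≫ j) ≫ biprod.inl ≫ kl = 0 := by
        apply (shiftFunctor C (1:ℤ)).map_injective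
        rw [Functor.map_comp, Functor.map_zero, hu₁', Category.assoc]
        have hstep : dl ≫ (biprod.inl ≫ kl)⟦(1:ℤ)⟧' = (t ≫ e₁⟦(1:ℤ)⟧') ≫ (biprod.inr ≫ kl)⟦(1:ℤ)⟧' := by
          rw [← hu₁, ← hju₃, Category.assoc, ← Functor.map_comp, hjkl, Functor.map_comp]
          simp only [Category.assoc]
        rw [hstep]
        rw [show u₁ ≫ (t ≫ e₁⟦(1:ℤ)⟧') ≫ (biprod.inr ≫ kl)⟦(1:ℤ)⟧'
            = (u₁ ≫ t ≫ e₁⟦(1:ℤ)⟧') ≫ (biprod.inr ≫ kl)⟦(1:ℤ)⟧' from by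
          simp only [Category.assoc], hz, Limits.zero_comp]
      -- step (m) : conclusion
      have hη₀e₁ : η₀ ≫ e₁ = 0 := hTV _
      have hsplit : u ≫ biprod.inl ≫ kl
          = (u - η₀ ≫ j) ≫ biprod.inl ≫ kl + (η₀ ≫ j) ≫ biprod.inl ≫ kl := by
        rw [← Preadditive.add_comp]
        congr 1
        abel
      rw [ht₀, hsplit, hukl, zero_add, Category.assoc η₀ j, hjkl,
        ← Category.assoc η₀ e₁, hη₀e₁, Limits.zero_comp]
    exact ⟨Q, hQ, ξ ≫ biprod.inl ≫ kl, μ, hs⟩
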